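/- Let x ∈ [1,∞)⁶ and i ∈ {2,3,5,6}. If ∂φ/∂xᵢ(x) ≥ 0, then for all t, s ≥ 0 one has ∂φ/∂xᵢ(x + t·mᵢ + s·m_{î}) ≥ 0. In particular, φ(x) ≤ φ(y) for every y ∈ [1,∞)⁶ with yᵢ ≥ xᵢ and y_j = x_j for all j ≠ i. -/

import Mathlib

open Real

/-- The cosine of the dihedral angle at the edge `e₁` of a generalized hyper-ideal
tetrahedron whose edge lengths `lᵢ` satisfy `cosh lᵢ = xᵢ`. -/
noncomputable def phi (x1 x2 x3 x4 x5 x6 : ℝ) : ℝ :=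
  (x2 * x3 + x5 * x6 + x1 * x2 * x5 + x1 * x3 * x6 - x1 ^ 2 * x4 + x4) /
    (Real.sqrt (2 * x1 * x2 * x6 + x1 ^ 2 + x2 ^ 2 + x6 ^ 2 - 1) *
      Real.sqrt (2 * x1 * x3 * x5 + x1 ^ 2 + x3 ^ 2 + x5 ^ 2 - 1))

/-- `phi` as a function of a vector `x : Fin 6 → ℝ`, where `x ⟨k-1⟩` plays the
role of the coordinate `x_k`, `k = 1, …, 6`. -/
noncomputable def phiV (x : Fin 6 → ℝ) : ℝ :=
  phi (x 0) (x 1) (x 2) (x 3) (x 4) (x 5)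

/-- The partial derivative `∂φ/∂x_{i+1}` of `phiV` in the `i`-th coordinate at `x`. -/
noncomputable def pphi (i : Fin 6) (x : Fin 6 → ℝ) : ℝ :=
  deriv (fun u => phiV (Function.update x i u)) (x i)

/-- The pairing `2̂ = 5, 3̂ = 6, 5̂ = 2, 6̂ = 3` of the indices `{2,3,5,6}`; in the
`0`-based indexing of `Fin 6` the pairs are `(1,4), (2,5), (4,1), (5,2)`. -/
def IsPairedIndex (i ih : Fin 6) : Prop :=
  (i = 1 ∧ ih = 4) ∨ (i = 2 ∧ ih = 5) ∨ (i = 4 ∧ ih = 1) ∨ (i = 5 ∧ ih = 2)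

/-- The symmetry `x₂ ↔ x₃`, `x₅ ↔ x₆` of `phi`. -/
lemma phi_swap (a b c d e f : ℝ) : phi a b c d e f = phi a c b d f e := by
  unfold phi
  rw [mul_comm (Real.sqrt (2 * a * c * e + a ^ 2 + c ^ 2 + e ^ 2 - 1))]
  ring_nf

lemma radpos {p q r : ℝ} (hp : 1 ≤ p) (hq : 1 ≤ q) (hr : 1 ≤ r) :
    0 < 2 * p * q * r + p ^ 2 + q ^ 2 + r ^ 2 - 1 := by
  have h1 : (1 : ℝ) ≤ p * q := by nlinarith
  have h2 : (1 : ℝ) ≤ p * q * r := by nlinarith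
  nlinarith

lemma hasDerivAt_slot2 (a b c d e f : ℝ)
    (hA : 0 < 2*a*b*f + a^2 + b^2 + f^2 - 1) (hB : 0 < 2*a*c*e + a^2 + c^2 + e^2 - 1) :
    HasDerivAt (fun u => phi a u c d e f)
      ((a^2-1)*(c*(1-f^2) + a*e + b*e*f + d*b + a*d*f) /
        (Real.sqrt (2*a*b*f + a^2 + b^2 + f^2 - 1) ^ 3 *
         Real.sqrt (2*a*c*e + a^2 + c^2 + e^2 - 1))) b := by
  set A : ℝ := 2*a*b*f + a^2 + b^2 + f^2 - 1 with hAdef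
  set B : ℝ := 2*a*c*e + a^2 + c^2 + e^2 - 1 with hBdef
  have hsA : 0 < Real.sqrt A := Real.sqrt_pos.mpr hA
  have hsB : 0 < Real.sqrt B := Real.sqrt_pos.mpr hB
  have hsA2 : Real.sqrt A ^ 2 = A := Real.sq_sqrt hA.le
  have hsB2 : Real.sqrt B ^ 2 = B := Real.sq_sqrt hB.le
  have hN : HasDerivAt (fun u : ℝ => u * c + e * f + a * u * e + a * c * f - a ^ 2 * d + d)
      (c + a*e) b := by
    have h : (fun u : ℝ => u * c + e * f + a * u * e + a * c * f - a ^ 2 * d + d)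
        = fun u : ℝ => u * (c + a*e) + (e * f + a * c * f - a ^ 2 * d + d) := by
      funext u; ring
    rw [h]
    simpa using (hasDerivAt_id b).mul_const (c + a*e) |>.add_const (e * f + a * c * f - a ^ 2 * d + d)
  have hAd : HasDerivAt (fun u : ℝ => 2*a*u*f + a^2 + u^2 + f^2 - 1) (2*a*f + 2*b) b := by
    have h : (fun u : ℝ => 2*a*u*f + a^2 + u^2 + f^2 - 1)
        = fun u : ℝ => u^2 + u * (2*a*f) + (a^2 + f^2 - 1) := by funext u; ring
    rw [h]
    have := ((hasDerivAt_pow 2 b).add ((hasDerivAt_id b).mul_const (2*a*f))).add_const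
      (a^2 + f^2 - 1)
    refine this.congr_deriv ?_; push_cast; ring
  have hsAd : HasDerivAt (fun u : ℝ => Real.sqrt (2*a*u*f + a^2 + u^2 + f^2 - 1))
      ((2*a*f + 2*b) / (2 * Real.sqrt A)) b := by
    have := hAd.sqrt (by rw [← hAdef]; exact hA.ne')
    simpa [← hAdef] using this
  have hden : HasDerivAt (fun u : ℝ => Real.sqrt (2*a*u*f + a^2 + u^2 + f^2 - 1) * Real.sqrt B)
      ((2*a*f + 2*b) / (2 * Real.sqrt A) * Real.sqrt B) b := hsAd.mul_const _
  have hden0 : Real.sqrt (2*a*b*f + a^2 + b^2 + f^2 - 1) * Real.sqrt B ≠ 0 := by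
    rw [← hAdef]; positivity
  have h := hN.div hden hden0
  have heq : (fun u => phi a u c d e f)
      = fun u => (u * c + e * f + a * u * e + a * c * f - a ^ 2 * d + d) /
          (Real.sqrt (2*a*u*f + a^2 + u^2 + f^2 - 1) * Real.sqrt B) := by
    funext u; unfold phi; rw [hBdef]
  rw [heq]
  refine h.congr_deriv ?_
  rw [← hAdef]
  rw [div_eq_div_iff (by positivity) (by positivity)]
  have hsA2' : Real.sqrt A ^ 2 = 2*a*b*f + a^2 + b^2 + f^2 - 1 := hsA2.trans hAdef
  field_simp
  linear_combination (c+a*e) * hsA2'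

lemma hasDerivAt_slot5 (a b c d e f : ℝ)
    (hA : 0 < 2*a*b*f + a^2 + b^2 + f^2 - 1) (hB : 0 < 2*a*c*e + a^2 + c^2 + e^2 - 1) :
    HasDerivAt (fun u => phi a b c d u f)
      ((a^2-1)*(f*(1-c^2) + a*b + b*c*e + d*e + a*c*d) /
        (Real.sqrt (2*a*b*f + a^2 + b^2 + f^2 - 1) *
         Real.sqrt (2*a*c*e + a^2 + c^2 + e^2 - 1) ^ 3)) e := by
  set A : ℝ := 2*a*b*f + a^2 + b^2 + f^2 - 1 with hAdef
  set B : ℝ := 2*a*c*e + a^2 + c^2 + e^2 - 1 with hBdef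
  have hsA : 0 < Real.sqrt A := Real.sqrt_pos.mpr hA
  have hsB : 0 < Real.sqrt B := Real.sqrt_pos.mpr hB
  have hsA2 : Real.sqrt A ^ 2 = A := Real.sq_sqrt hA.le
  have hsB2 : Real.sqrt B ^ 2 = B := Real.sq_sqrt hB.le
  have hN : HasDerivAt (fun u : ℝ => b * c + u * f + a * b * u + a * c * f - a ^ 2 * d + d)
      (f + a*b) e := by
    have h : (fun u : ℝ => b * c + u * f + a * b * u + a * c * f - a ^ 2 * d + d)
        = fun u : ℝ => u * (f + a*b) + (b * c + a * c * f - a ^ 2 * d + d) := by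
      funext u; ring
    rw [h]
    simpa using (hasDerivAt_id e).mul_const (f + a*b) |>.add_const (b * c + a * c * f - a ^ 2 * d + d)
  have hBd : HasDerivAt (fun u : ℝ => 2*a*c*u + a^2 + c^2 + u^2 - 1) (2*a*c + 2*e) e := by
    have h : (fun u : ℝ => 2*a*c*u + a^2 + c^2 + u^2 - 1)
        = fun u : ℝ => u^2 + u * (2*a*c) + (a^2 + c^2 - 1) := by funext u; ring
    rw [h]
    have := ((hasDerivAt_pow 2 e).add ((hasDerivAt_id e).mul_const (2*a*c))).add_const
      (a^2 + c^2 - 1)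
    refine this.congr_deriv ?_; push_cast; ring
  have hsBd : HasDerivAt (fun u : ℝ => Real.sqrt (2*a*c*u + a^2 + c^2 + u^2 - 1))
      ((2*a*c + 2*e) / (2 * Real.sqrt B)) e := by
    have := hBd.sqrt (by rw [← hBdef]; exact hB.ne')
    simpa [← hBdef] using this
  have hden : HasDerivAt (fun u : ℝ => Real.sqrt A * Real.sqrt (2*a*c*u + a^2 + c^2 + u^2 - 1))
      (Real.sqrt A * ((2*a*c + 2*e) / (2 * Real.sqrt B))) e := hsBd.const_mul _
  have hden0 : Real.sqrt A * Real.sqrt (2*a*c*e + a^2 + c^2 + e^2 - 1) ≠ 0 := by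
    rw [← hBdef]; positivity
  have h := hN.div hden hden0
  have heq : (fun u => phi a b c d u f)
      = fun u => (b * c + u * f + a * b * u + a * c * f - a ^ 2 * d + d) /
          (Real.sqrt A * Real.sqrt (2*a*c*u + a^2 + c^2 + u^2 - 1)) := by
    funext u; unfold phi; rw [hAdef]
  rw [heq]
  refine h.congr_deriv ?_
  rw [← hBdef]
  rw [div_eq_div_iff (by positivity) (by positivity)]
  have hsB2' : Real.sqrt B ^ 2 = 2*a*c*e + a^2 + c^2 + e^2 - 1 := hsB2.trans hBdef
  field_simp
  linear_combination (f+a*b) * hsB2'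

/-- The abstract propagation/monotonicity argument. -/
lemma aux_main (i ih : Fin 6)
    (G : (Fin 6 → ℝ) → ℝ)
    (hG : ∀ z : Fin 6 → ℝ, (∀ j, 1 ≤ z j) → ∃ d : ℝ, 0 < d ∧
      HasDerivAt (fun u => phiV (Function.update z i u)) (G z / d) (z i))
    (hmono : ∀ z : Fin 6 → ℝ, (∀ j, 1 ≤ z j) → ∀ t s : ℝ, 0 ≤ t → 0 ≤ s → 0 ≤ G z →
      0 ≤ G (z + t • (Pi.single i 1 : Fin 6 → ℝ) + s • (Pi.single ih 1 : Fin 6 → ℝ)))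
    (x : Fin 6 → ℝ) (hx : ∀ j, 1 ≤ x j) (hd : 0 ≤ pphi i x) :
    (∀ t s : ℝ, 0 ≤ t → 0 ≤ s →
        0 ≤ pphi i (x + t • (Pi.single i 1 : Fin 6 → ℝ) + s • (Pi.single ih 1 : Fin 6 → ℝ))) ∧
      (∀ y : Fin 6 → ℝ, (∀ j, 1 ≤ y j) → x i ≤ y i → (∀ j, j ≠ i → y j = x j) →
        phiV x ≤ phiV y) := by
  have coords : ∀ t s : ℝ, 0 ≤ t → 0 ≤ s → ∀ j,
      1 ≤ (x + t • (Pi.single i 1 : Fin 6 → ℝ) + s • (Pi.single ih 1 : Fin 6 → ℝ)) j := by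
    intro t s ht hs j
    have := hx j
    simp only [Pi.add_apply, Pi.smul_apply, Pi.single_apply, smul_eq_mul]
    split_ifs <;> simp <;> linarith
  -- 0 ≤ G x
  have hGx : 0 ≤ G x := by
    obtain ⟨d, hd0, hder⟩ := hG x hx
    have : pphi i x = G x / d := hder.deriv
    rw [this] at hd
    have h := (le_div_iff₀ hd0).mp hd
    linarith
  have part1 : ∀ t s : ℝ, 0 ≤ t → 0 ≤ s →
      0 ≤ pphi i (x + t • (Pi.single i 1 : Fin 6 → ℝ) + s • (Pi.single ih 1 : Fin 6 → ℝ)) := by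
    intro t s ht hs
    obtain ⟨d, hd0, hder⟩ := hG _ (coords t s ht hs)
    rw [pphi, hder.deriv]
    exact div_nonneg (hmono x hx t s ht hs hGx) hd0.le
  refine ⟨part1, ?_⟩
  intro y hy hxy hyj
  set f : ℝ → ℝ := fun u => phiV (Function.update x i u) with hfdef
  have key : ∀ u : ℝ, x i ≤ u →
      HasDerivAt f (pphi i (Function.update x i u)) u ∧
      0 ≤ pphi i (Function.update x i u) := by
    intro u hu
    set z : Fin 6 → ℝ := Function.update x i u with hzdef
    have hz1 : ∀ j, 1 ≤ z j := by
      intro j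
      rcases eq_or_ne j i with h | h
      · subst h; rw [hzdef, Function.update_self]; linarith [hx j]
      · rw [hzdef, Function.update_of_ne h]; exact hx j
    obtain ⟨d, hd0, hder⟩ := hG z hz1
    have hzeq : (fun v => phiV (Function.update z i v)) = f := by
      funext v; rw [hzdef, Function.update_idem]
    have hzi : z i = u := by rw [hzdef, Function.update_self]
    rw [hzeq, hzi] at hder
    have hpz : pphi i z = G z / d := by
      rw [pphi, hzeq, hzi, hder.deriv]
    have hznn : 0 ≤ pphi i z := by
      have hzx : z = x + (u - x i) • (Pi.single i 1 : Fin 6 → ℝ)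
          + (0:ℝ) • (Pi.single ih 1 : Fin 6 → ℝ) := by
        funext j
        rcases eq_or_ne j i with h | h
        · subst h
          simp [hzdef, Function.update_self, Pi.single_apply]
        · simp [hzdef, Function.update_of_ne h, Pi.single_apply, h]
      rw [hzx]
      exact part1 (u - x i) 0 (by linarith) le_rfl
    rw [hpz] at hznn ⊢
    exact ⟨hder, hznn⟩
  have hmon : MonotoneOn f (Set.Icc (x i) (y i)) := by
    apply monotoneOn_of_deriv_nonneg (convex_Icc _ _)
    · intro u hu
      exact ((key u hu.1).1).continuousAt.continuousWithinAt
    · intro u hu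
      rw [interior_Icc] at hu
      exact ((key u hu.1.le).1).differentiableAt.differentiableWithinAt
    · intro u hu
      rw [interior_Icc] at hu
      obtain ⟨h1, h2⟩ := key u hu.1.le
      rw [h1.deriv]
      exact h2
  have hyx : y = Function.update x i (y i) := by
    funext j
    rcases eq_or_ne j i with h | h
    · subst h; rw [Function.update_self]
    · rw [Function.update_of_ne h]; exact hyj j h
  have hx_eq : phiV x = f (x i) := by
    rw [hfdef]; simp [Function.update_eq_self]
  have hy_eq : f (y i) = phiV y := by
    simp only [hfdef]
    rw [← hyx]
  rw [hx_eq, ← hy_eq]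
  exact hmon ⟨le_rfl, hxy⟩ ⟨hxy, le_rfl⟩ hxy

theorem phi_partial_nonneg_propagates (x : Fin 6 → ℝ) (hx : ∀ j, 1 ≤ x j)
    (i ih : Fin 6) (hpair : IsPairedIndex i ih) (hd : 0 ≤ pphi i x) :
    (∀ t s : ℝ, 0 ≤ t → 0 ≤ s →
        0 ≤ pphi i (x + t • (Pi.single i 1 : Fin 6 → ℝ) + s • (Pi.single ih 1 : Fin 6 → ℝ))) ∧
      (∀ y : Fin 6 → ℝ, (∀ j, 1 ≤ y j) → x i ≤ y i → (∀ j, j ≠ i → y j = x j) →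
        phiV x ≤ phiV y) := by
  rcases hpair with ⟨hi, hih⟩ | ⟨hi, hih⟩ | ⟨hi, hih⟩ | ⟨hi, hih⟩ <;> subst hi <;> subst hih
  · -- i = 1 (x₂), ih = 4 (x₅)
    apply aux_main 1 4
      (fun z => (z 0 ^ 2 - 1) * (z 2 * (1 - z 5 ^ 2) + z 0 * z 4 + z 1 * z 4 * z 5
        + z 3 * z 1 + z 0 * z 3 * z 5))
    · intro z hz
      refine ⟨Real.sqrt (2*(z 0)*(z 1)*(z 5) + (z 0)^2 + (z 1)^2 + (z 5)^2 - 1) ^ 3 *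
        Real.sqrt (2*(z 0)*(z 2)*(z 4) + (z 0)^2 + (z 2)^2 + (z 4)^2 - 1), ?_, ?_⟩
      · have hA := radpos (hz 0) (hz 1) (hz 5)
        have hB := radpos (hz 0) (hz 2) (hz 4)
        positivity
      · have heq : (fun u => phiV (Function.update z 1 u))
            = fun u => phi (z 0) u (z 2) (z 3) (z 4) (z 5) := by
          funext u; simp [phiV, Function.update_apply]
        rw [heq, show z 1 = z 1 from rfl]
        exact hasDerivAt_slot2 (z 0) (z 1) (z 2) (z 3) (z 4) (z 5)
          (radpos (hz 0) (hz 1) (hz 5)) (radpos (hz 0) (hz 2) (hz 4))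
    · intro z hz t s ht hs hGz
      have e0 : ∀ j : Fin 6, (z + t • (Pi.single 1 1 : Fin 6 → ℝ)
          + s • (Pi.single 4 1 : Fin 6 → ℝ)) j
          = z j + t * (if j = 1 then 1 else 0) + s * (if j = 4 then 1 else 0) := by
        intro j; simp [Pi.single_apply]
      simp only [e0]
      simp only [Fin.reduceEq, reduceIte, ite_true, ite_false, mul_one, mul_zero, add_zero]
      have h1 : (0:ℝ) ≤ z 0 ^ 2 - 1 := by nlinarith [hz 0, sq_nonneg (z 0 - 1)]
      have hz0 : (0:ℝ) ≤ z 0 := by linarith [hz 0]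
      have hz1 : (0:ℝ) ≤ z 1 := by linarith [hz 1]
      have hz3 : (0:ℝ) ≤ z 3 := by linarith [hz 3]
      have hz4 : (0:ℝ) ≤ z 4 := by linarith [hz 4]
      have hz5 : (0:ℝ) ≤ z 5 := by linarith [hz 5]
      have h2 : (0:ℝ) ≤ z 0 * s + z 5 * (z 1 * s + z 4 * t + t * s) + z 3 * t :=
        add_nonneg (add_nonneg (mul_nonneg hz0 hs) (mul_nonneg hz5
          (add_nonneg (add_nonneg (mul_nonneg hz1 hs) (mul_nonneg hz4 ht))
            (mul_nonneg ht hs)))) (mul_nonneg hz3 ht)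
      linarith [mul_nonneg h1 h2, hGz]
    · exact hx
    · exact hd
  · -- i = 2 (x₃), ih = 5 (x₆)
    apply aux_main 2 5
      (fun z => (z 0 ^ 2 - 1) * (z 1 * (1 - z 4 ^ 2) + z 0 * z 5 + z 2 * z 5 * z 4
        + z 3 * z 2 + z 0 * z 3 * z 4))
    · intro z hz
      refine ⟨Real.sqrt (2*(z 0)*(z 2)*(z 4) + (z 0)^2 + (z 2)^2 + (z 4)^2 - 1) ^ 3 *
        Real.sqrt (2*(z 0)*(z 1)*(z 5) + (z 0)^2 + (z 1)^2 + (z 5)^2 - 1), ?_, ?_⟩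
      · have hA := radpos (hz 0) (hz 2) (hz 4)
        have hB := radpos (hz 0) (hz 1) (hz 5)
        positivity
      · have heq : (fun u => phiV (Function.update z 2 u))
            = fun u => phi (z 0) u (z 1) (z 3) (z 5) (z 4) := by
          funext u
          simp only [phiV, Function.update_apply]
          simp only [Fin.reduceEq, reduceIte, ite_true, ite_false]
          rw [phi_swap]
        rw [heq, show z 2 = z 2 from rfl]
        exact hasDerivAt_slot2 (z 0) (z 2) (z 1) (z 3) (z 5) (z 4)
          (radpos (hz 0) (hz 2) (hz 4)) (radpos (hz 0) (hz 1) (hz 5))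
    · intro z hz t s ht hs hGz
      have e0 : ∀ j : Fin 6, (z + t • (Pi.single 2 1 : Fin 6 → ℝ)
          + s • (Pi.single 5 1 : Fin 6 → ℝ)) j
          = z j + t * (if j = 2 then 1 else 0) + s * (if j = 5 then 1 else 0) := by
        intro j; simp [Pi.single_apply]
      simp only [e0]
      simp only [Fin.reduceEq, reduceIte, ite_true, ite_false, mul_one, mul_zero, add_zero]
      have h1 : (0:ℝ) ≤ z 0 ^ 2 - 1 := by nlinarith [hz 0, sq_nonneg (z 0 - 1)]
      have hz0 : (0:ℝ) ≤ z 0 := by linarith [hz 0]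
      have hz2 : (0:ℝ) ≤ z 2 := by linarith [hz 2]
      have hz3 : (0:ℝ) ≤ z 3 := by linarith [hz 3]
      have hz4 : (0:ℝ) ≤ z 4 := by linarith [hz 4]
      have hz5 : (0:ℝ) ≤ z 5 := by linarith [hz 5]
      have h2 : (0:ℝ) ≤ z 0 * s + z 4 * (z 2 * s + z 5 * t + t * s) + z 3 * t :=
        add_nonneg (add_nonneg (mul_nonneg hz0 hs) (mul_nonneg hz4
          (add_nonneg (add_nonneg (mul_nonneg hz2 hs) (mul_nonneg hz5 ht))
            (mul_nonneg ht hs)))) (mul_nonneg hz3 ht)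
      linarith [mul_nonneg h1 h2, hGz]
    · exact hx
    · exact hd
  · -- i = 4 (x₅), ih = 1 (x₂)
    apply aux_main 4 1
      (fun z => (z 0 ^ 2 - 1) * (z 5 * (1 - z 2 ^ 2) + z 0 * z 1 + z 1 * z 2 * z 4
        + z 3 * z 4 + z 0 * z 2 * z 3))
    · intro z hz
      refine ⟨Real.sqrt (2*(z 0)*(z 1)*(z 5) + (z 0)^2 + (z 1)^2 + (z 5)^2 - 1) *
        Real.sqrt (2*(z 0)*(z 2)*(z 4) + (z 0)^2 + (z 2)^2 + (z 4)^2 - 1) ^ 3, ?_, ?_⟩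
      · have hA := radpos (hz 0) (hz 1) (hz 5)
        have hB := radpos (hz 0) (hz 2) (hz 4)
        positivity
      · have heq : (fun u => phiV (Function.update z 4 u))
            = fun u => phi (z 0) (z 1) (z 2) (z 3) u (z 5) := by
          funext u; simp [phiV, Function.update_apply]
        rw [heq, show z 4 = z 4 from rfl]
        exact hasDerivAt_slot5 (z 0) (z 1) (z 2) (z 3) (z 4) (z 5)
          (radpos (hz 0) (hz 1) (hz 5)) (radpos (hz 0) (hz 2) (hz 4))
    · intro z hz t s ht hs hGz
      have e0 : ∀ j : Fin 6, (z + t • (Pi.single 4 1 : Fin 6 → ℝ)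
          + s • (Pi.single 1 1 : Fin 6 → ℝ)) j
          = z j + t * (if j = 4 then 1 else 0) + s * (if j = 1 then 1 else 0) := by
        intro j; simp [Pi.single_apply]
      simp only [e0]
      simp only [Fin.reduceEq, reduceIte, ite_true, ite_false, mul_one, mul_zero, add_zero]
      have h1 : (0:ℝ) ≤ z 0 ^ 2 - 1 := by nlinarith [hz 0, sq_nonneg (z 0 - 1)]
      have hz0 : (0:ℝ) ≤ z 0 := by linarith [hz 0]
      have hz1 : (0:ℝ) ≤ z 1 := by linarith [hz 1]
      have hz2 : (0:ℝ) ≤ z 2 := by linarith [hz 2]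
      have hz3 : (0:ℝ) ≤ z 3 := by linarith [hz 3]
      have hz4 : (0:ℝ) ≤ z 4 := by linarith [hz 4]
      have h2 : (0:ℝ) ≤ z 0 * s + z 2 * (z 1 * t + z 4 * s + s * t) + z 3 * t :=
        add_nonneg (add_nonneg (mul_nonneg hz0 hs) (mul_nonneg hz2
          (add_nonneg (add_nonneg (mul_nonneg hz1 ht) (mul_nonneg hz4 hs))
            (mul_nonneg hs ht)))) (mul_nonneg hz3 ht)
      linarith [mul_nonneg h1 h2, hGz]
    · exact hx
    · exact hd
  · -- i = 5 (x₆), ih = 2 (x₃)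
    apply aux_main 5 2
      (fun z => (z 0 ^ 2 - 1) * (z 4 * (1 - z 1 ^ 2) + z 0 * z 2 + z 2 * z 1 * z 5
        + z 3 * z 5 + z 0 * z 1 * z 3))
    · intro z hz
      refine ⟨Real.sqrt (2*(z 0)*(z 2)*(z 4) + (z 0)^2 + (z 2)^2 + (z 4)^2 - 1) *
        Real.sqrt (2*(z 0)*(z 1)*(z 5) + (z 0)^2 + (z 1)^2 + (z 5)^2 - 1) ^ 3, ?_, ?_⟩
      · have hA := radpos (hz 0) (hz 2) (hz 4)
        have hB := radpos (hz 0) (hz 1) (hz 5)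
        positivity
      · have heq : (fun u => phiV (Function.update z 5 u))
            = fun u => phi (z 0) (z 2) (z 1) (z 3) u (z 4) := by
          funext u
          simp only [phiV, Function.update_apply]
          simp only [Fin.reduceEq, reduceIte, ite_true, ite_false]
          rw [phi_swap]
        rw [heq, show z 5 = z 5 from rfl]
        exact hasDerivAt_slot5 (z 0) (z 2) (z 1) (z 3) (z 5) (z 4)
          (radpos (hz 0) (hz 2) (hz 4)) (radpos (hz 0) (hz 1) (hz 5))
    · intro z hz t s ht hs hGz
      have e0 : ∀ j : Fin 6, (z + t • (Pi.single 5 1 : Fin 6 → ℝ)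
          + s • (Pi.single 2 1 : Fin 6 → ℝ)) j
          = z j + t * (if j = 5 then 1 else 0) + s * (if j = 2 then 1 else 0) := by
        intro j; simp [Pi.single_apply]
      simp only [e0]
      simp only [Fin.reduceEq, reduceIte, ite_true, ite_false, mul_one, mul_zero, add_zero]
      have h1 : (0:ℝ) ≤ z 0 ^ 2 - 1 := by nlinarith [hz 0, sq_nonneg (z 0 - 1)]
      have hz0 : (0:ℝ) ≤ z 0 := by linarith [hz 0]
      have hz1 : (0:ℝ) ≤ z 1 := by linarith [hz 1]
      have hz2 : (0:ℝ) ≤ z 2 := by linarith [hz 2]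
      have hz3 : (0:ℝ) ≤ z 3 := by linarith [hz 3]
      have hz5 : (0:ℝ) ≤ z 5 := by linarith [hz 5]
      have h2 : (0:ℝ) ≤ z 0 * s + z 1 * (z 2 * t + z 5 * s + s * t) + z 3 * t :=
        add_nonneg (add_nonneg (mul_nonneg hz0 hs) (mul_nonneg hz1
          (add_nonneg (add_nonneg (mul_nonneg hz2 ht) (mul_nonneg hz5 hs))
            (mul_nonneg hs ht)))) (mul_nonneg hz3 ht)
      linarith [mul_nonneg h1 h2, hGz]
    · exact hx
    · exact hd
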